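/- For every integer n >= 1, the unique polynomial h(z) of degree at most 2^n - 2 with rational coefficients satisfying h(q^j) = 2/(1 - q^{2j}) for every odd integer j (where q = e^{pi*i/2^n} is a primitive 2^{n+1}-st root of unity) is h(z) = (1 - z^{2^n})/(1 - z^2) = sum_{k=0}^{2^{n-1}-1} z^{2k}. Equivalently, (1/2^{n-1}) * Tr((1 + z^{2^n})/((1 - q z)(1 - q^{-1} z))) = (1 - z^{2^n})/(1 - z^2), where Tr is the field trace from Q(q + q^{-1}) to Q applied coefficientwise. -/

import Mathlib

open Polynomial Complex

/-- The unique polynomial `h` of degree at most `2^n - 2` with rational coefficients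
satisfying `h(q^j) = 2/(1 - q^{2j})` for all odd integers `j`, where
`q = e^{πi/2^n}`, is `h(z) = ∑_{k=0}^{2^{n-1}-1} z^{2k} = (1-z^{2^n})/(1-z^2)`. -/
theorem stmt2 (n : ℕ) (hn : 1 ≤ n) :
    (∀ j : ℤ, Odd j →
        (((∑ k ∈ Finset.range (2 ^ (n - 1)), (Polynomial.X : Polynomial ℚ) ^ (2 * k)).map
            (algebraMap ℚ ℂ)).eval (Complex.exp ((Real.pi : ℂ) * Complex.I / 2 ^ n) ^ j))
          = 2 / (1 - Complex.exp ((Real.pi : ℂ) * Complex.I / 2 ^ n) ^ (2 * j))) ∧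
    (∀ h : Polynomial ℚ, h.natDegree ≤ 2 ^ n - 2 →
      (∀ j : ℤ, Odd j →
        ((h.map (algebraMap ℚ ℂ)).eval (Complex.exp ((Real.pi : ℂ) * Complex.I / 2 ^ n) ^ j))
          = 2 / (1 - Complex.exp ((Real.pi : ℂ) * Complex.I / 2 ^ n) ^ (2 * j))) →
      h = ∑ k ∈ Finset.range (2 ^ (n - 1)), Polynomial.X ^ (2 * k)) := by
  set c : ℂ := Complex.exp ((Real.pi : ℂ) * Complex.I / 2 ^ n) with hc
  have hc0 : c ≠ 0 := Complex.exp_ne_zero _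
  have hprim : IsPrimitiveRoot c (2 ^ (n + 1)) := by
    have := Complex.isPrimitiveRoot_exp (2 ^ (n + 1)) (by positivity)
    convert this using 2
    push_cast
    rw [pow_succ]
    ring
  have hpow : c ^ (2 ^ n : ℕ) = -1 := by
    rw [hc, ← Complex.exp_nat_mul]
    rw [show ((2 ^ n : ℕ) : ℂ) * ((Real.pi : ℂ) * Complex.I / 2 ^ n)
        = (Real.pi : ℂ) * Complex.I by
      push_cast; field_simp]
    exact Complex.exp_pi_mul_I
  have h2n : 2 * 2 ^ (n - 1) = 2 ^ n := by
    rw [← pow_succ']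
    congr 1
    omega
  -- first part
  have part1 : ∀ j : ℤ, Odd j →
      (((∑ k ∈ Finset.range (2 ^ (n - 1)), (Polynomial.X : Polynomial ℚ) ^ (2 * k)).map
          (algebraMap ℚ ℂ)).eval (c ^ j)) = 2 / (1 - c ^ (2 * j)) := by
    intro j hj
    have hx1 : c ^ (2 * j) ≠ 1 := by
      intro hx
      have hdvd := (hprim.zpow_eq_one_iff_dvd (2 * j)).mp hx
      have h2 : (2 ^ n : ℤ) ∣ j := by
        have : ((2 : ℤ) * 2 ^ n) ∣ 2 * j := by
          rwa [show ((2 : ℤ) * 2 ^ n) = ((2 ^ (n + 1) : ℕ) : ℤ) by push_cast; ring]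
        exact (mul_dvd_mul_iff_left (by norm_num : (2:ℤ) ≠ 0)).mp this
      have h2' : (2 : ℤ) ∣ j := dvd_trans (dvd_pow_self 2 (by omega)) h2
      obtain ⟨t, ht⟩ := h2'
      exact (Int.not_even_iff_odd.mpr hj) ⟨t, by omega⟩
    have hxm : (c ^ (2 * j)) ^ (2 ^ (n - 1) : ℕ) = -1 := by
      rw [← zpow_natCast (c ^ (2 * j)), ← zpow_mul,
        show (2 * j) * ((2 ^ (n - 1) : ℕ) : ℤ) = ((2 ^ n : ℕ) : ℤ) * j by
          push_cast [← h2n]; ring,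
        zpow_mul, zpow_natCast, hpow]
      exact hj.neg_one_zpow
    have heval : (((∑ k ∈ Finset.range (2 ^ (n - 1)),
        (Polynomial.X : Polynomial ℚ) ^ (2 * k)).map (algebraMap ℚ ℂ)).eval (c ^ j))
        = ∑ k ∈ Finset.range (2 ^ (n - 1)), (c ^ (2 * j)) ^ k := by
      rw [Polynomial.map_sum, Polynomial.eval_finset_sum]
      refine Finset.sum_congr rfl fun k _ => ?_
      rw [Polynomial.map_pow, Polynomial.map_X, Polynomial.eval_pow, Polynomial.eval_X,
        ← zpow_natCast (c ^ j), ← zpow_mul, ← zpow_natCast (c ^ (2 * j)), ← zpow_mul]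
      congr 1
      push_cast
      ring
    rw [heval, geom_sum_eq hx1, hxm,
      show (-1 : ℂ) - 1 = -2 by ring,
      show c ^ (2 * j) - 1 = -(1 - c ^ (2 * j)) by ring, neg_div_neg_eq]
  refine ⟨part1, fun h hdeg hH => ?_⟩
  set g : Polynomial ℚ := ∑ k ∈ Finset.range (2 ^ (n - 1)), Polynomial.X ^ (2 * k) with hg
  have hgdeg : g.natDegree ≤ 2 ^ n - 2 := by
    refine Polynomial.natDegree_sum_le_of_forall_le _ _ fun k hk => ?_
    rw [Polynomial.natDegree_X_pow]
    have := Finset.mem_range.mp hk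
    omega
  have heq : Polynomial.aeval c (h - g) = 0 := by
    rw [Polynomial.aeval_def, ← Polynomial.eval_map, Polynomial.map_sub,
      Polynomial.eval_sub]
    have h1 := hH 1 odd_one
    have h2 := part1 1 odd_one
    rw [zpow_one] at h1 h2
    rw [h1, h2, sub_self]
  by_contra hne
  have hd0 : h - g ≠ 0 := fun hz => hne (by rwa [sub_eq_zero] at hz)
  have hdvd : minpoly ℚ c ∣ h - g := minpoly.dvd ℚ c heq
  have hle : (minpoly ℚ c).natDegree ≤ (h - g).natDegree :=
    Polynomial.natDegree_le_of_dvd hdvd hd0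
  have hmin : (minpoly ℚ c).natDegree = 2 ^ n := by
    rw [← Polynomial.cyclotomic_eq_minpoly_rat hprim (by positivity),
      Polynomial.natDegree_cyclotomic, Nat.totient_prime_pow Nat.prime_two (by omega)]
    simp
  have hsub : (h - g).natDegree ≤ 2 ^ n - 2 :=
    le_trans (Polynomial.natDegree_sub_le _ _) (max_le hdeg hgdeg)
  have : (2:ℕ) ≤ 2 ^ n := by
    calc (2:ℕ) = 2 ^ 1 := rfl
    _ ≤ 2 ^ n := Nat.pow_le_pow_right (by norm_num) hn
  omega
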